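/- Let U ⊆ ℝ² be open, let A : U → Sym₂(ℝ) be a twice continuously differentiable field of symmetric 2×2 matrices, and let p : U → ℝ be three times continuously differentiable. Set 𝐄 = 2∇²p·A·∇p and w = tr(A·∇²p). Then on U: div(A𝐄) = −4·det(A)·det(∇²p) + 2·div(w·A·∇p) + 2·⟨[[−∂₂₂p, ∂₁₂p],[∂₁₂p, −∂₁₁p]]·∇p, ∇(det A)⟩. -/

import Mathlib

open Matrix

/-- Partial derivative in the `i`-th coordinate direction. -/
noncomputable def pd (i : Fin 2) (f : (Fin 2 → ℝ) → ℝ) (x : Fin 2 → ℝ) : ℝ :=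
  fderiv ℝ f x (Pi.single i 1)

/-- Gradient of a scalar function on `ℝ²`. -/
noncomputable def grad (f : (Fin 2 → ℝ) → ℝ) (x : Fin 2 → ℝ) : Fin 2 → ℝ :=
  fun i => pd i f x

/-- Divergence of a vector field on `ℝ²`. -/
noncomputable def divg (F : (Fin 2 → ℝ) → Fin 2 → ℝ) (x : Fin 2 → ℝ) : ℝ :=
  ∑ i, pd i (fun y => F y i) x

/-- Hessian matrix of a scalar function on `ℝ²`. -/
noncomputable def hess (p : (Fin 2 → ℝ) → ℝ) (x : Fin 2 → ℝ) : Matrix (Fin 2) (Fin 2) ℝ :=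
  Matrix.of fun i j => pd i (fun y => pd j p y) x

section Helpers

lemma pd_congr_nhds {i : Fin 2} {f g : (Fin 2 → ℝ) → ℝ} {x : Fin 2 → ℝ}
    (h : f =ᶠ[nhds x] g) : pd i f x = pd i g x := by
  unfold pd; rw [h.fderiv_eq]

/-- `f` is differentiable at `x` and its `i`-th partial derivative there is `d`. -/
structure HP (i : Fin 2) (f : (Fin 2 → ℝ) → ℝ) (x : Fin 2 → ℝ) (d : ℝ) : Prop where
  diff : DifferentiableAt ℝ f x
  deriv : pd i f x = d

variable {i : Fin 2} {f g : (Fin 2 → ℝ) → ℝ} {x : Fin 2 → ℝ} {df dg : ℝ}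

lemma HP.add (hf : HP i f x df) (hg : HP i g x dg) :
    HP i (fun y => f y + g y) x (df + dg) :=
  ⟨hf.diff.add hg.diff, by
    unfold pd; rw [fderiv_fun_add hf.diff hg.diff]
    simp only [ContinuousLinearMap.add_apply]
    rw [← hf.deriv, ← hg.deriv]; rfl⟩

lemma HP.sub (hf : HP i f x df) (hg : HP i g x dg) :
    HP i (fun y => f y - g y) x (df - dg) :=
  ⟨hf.diff.sub hg.diff, by
    unfold pd; rw [fderiv_fun_sub hf.diff hg.diff]
    simp only [ContinuousLinearMap.sub_apply]
    rw [← hf.deriv, ← hg.deriv]; rfl⟩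

lemma HP.mul (hf : HP i f x df) (hg : HP i g x dg) :
    HP i (fun y => f y * g y) x (f x * dg + g x * df) :=
  ⟨hf.diff.mul hg.diff, by
    unfold pd; rw [fderiv_fun_mul hf.diff hg.diff]
    simp only [ContinuousLinearMap.add_apply, ContinuousLinearMap.smul_apply, smul_eq_mul]
    rw [← hf.deriv, ← hg.deriv]; rfl⟩

lemma HP.const_mul (c : ℝ) (hf : HP i f x df) :
    HP i (fun y => c * f y) x (c * df) :=
  ⟨hf.diff.const_mul c, by
    unfold pd; rw [fderiv_const_mul hf.diff c]
    simp only [ContinuousLinearMap.smul_apply, smul_eq_mul]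
    rw [← hf.deriv]; rfl⟩

lemma contDiffAt_pd {n : WithTop ℕ∞} (hf : ContDiffAt ℝ (n + 1) f x) (i : Fin 2) :
    ContDiffAt ℝ n (pd i f) x := by
  have h : ContDiffAt ℝ n (fderiv ℝ f) x := hf.fderiv_right le_rfl
  exact h.clm_apply contDiffAt_const

lemma pd_comm (hf : ContDiffAt ℝ 2 f x) (i j : Fin 2) :
    pd i (fun y => pd j f y) x = pd j (fun y => pd i f y) x := by
  have hd : DifferentiableAt ℝ (fderiv ℝ f) x :=
    (hf.fderiv_right (m := 1) (by norm_num)).differentiableAt one_ne_zero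
  have h1 : ∀ u v : Fin 2 → ℝ,
      fderiv ℝ (fun y => fderiv ℝ f y v) x u = fderiv ℝ (fderiv ℝ f) x u v := by
    intro u v
    rw [fderiv_clm_apply hd (differentiableAt_const v)]
    simp
  show fderiv ℝ (fun y => fderiv ℝ f y (Pi.single j 1)) x (Pi.single i 1)
      = fderiv ℝ (fun y => fderiv ℝ f y (Pi.single i 1)) x (Pi.single j 1)
  rw [h1, h1, hf.isSymmSndFDerivAt (by simp)]

end Helpers

/-- The identity
`div(A𝐄) = −4 det(A) det(∇²p) + 2 div(w A ∇p)
  + 2 ⟨[[−∂₂₂p, ∂₁₂p],[∂₁₂p, −∂₁₁p]]·∇p, ∇(det A)⟩`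
for `𝐄 = 2∇²p·A·∇p` and `w = tr(A·∇²p)`. -/
theorem stmt10 (U : Set (Fin 2 → ℝ)) (hU : IsOpen U)
    (A : (Fin 2 → ℝ) → Matrix (Fin 2) (Fin 2) ℝ)
    (hAsymm : ∀ x ∈ U, (A x).IsSymm)
    (hA : ∀ i j, ContDiffOn ℝ 2 (fun x => A x i j) U)
    (p : (Fin 2 → ℝ) → ℝ) (hp : ContDiffOn ℝ 3 p U)
    (E : (Fin 2 → ℝ) → Fin 2 → ℝ)
    (hE : E = fun y => (2 : ℝ) • (hess p y).mulVec ((A y).mulVec (grad p y)))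
    (w : (Fin 2 → ℝ) → ℝ) (hw : w = fun y => (A y * hess p y).trace)
    (x : Fin 2 → ℝ) (hx : x ∈ U) :
    divg (fun y => (A y).mulVec (E y)) x =
      -4 * (A x).det * (hess p x).det
        + 2 * divg (fun y => w y • (A y).mulVec (grad p y)) x
        + 2 * ((!![-(hess p x 1 1), hess p x 0 1;
                    hess p x 0 1, -(hess p x 0 0)]).mulVec (grad p x)
                ⬝ᵥ grad (fun y => (A y).det) x) := by
  have hmem := hU.mem_nhds hx
  have hpAt : ContDiffAt ℝ 3 p x := hp.contDiffAt hmem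
  -- atoms
  have hpA : ∀ m k l : Fin 2, HP m (fun y => A y k l) x (pd m (fun y => A y k l) x) :=
    fun m k l => ⟨((hA k l).contDiffAt hmem).differentiableAt (by norm_num), rfl⟩
  have hpd2 : ∀ l : Fin 2, ContDiffAt ℝ 2 (fun y => pd l p y) x :=
    fun l => contDiffAt_pd (n := 2) (hpAt.of_le (by norm_num)) l
  have hpg : ∀ m l : Fin 2, HP m (fun y => pd l p y) x (hess p x m l) :=
    fun m l => ⟨(hpd2 l).differentiableAt (by norm_num), rfl⟩
  have hph : ∀ m k l : Fin 2, HP m (fun y => hess p y k l) x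
      (pd m (fun y => hess p y k l) x) := by
    intro m k l
    refine ⟨?_, rfl⟩
    have h1 : ContDiffAt ℝ 1 (pd k (fun y => pd l p y)) x :=
      contDiffAt_pd (n := 1) ((hpd2 l).of_le (by norm_num)) k
    exact h1.differentiableAt one_ne_zero
  -- combinator derivatives
  have hB := fun (m k : Fin 2) => ((hpA m k 0).mul (hpg m 0)).add ((hpA m k 1).mul (hpg m 1))
  have hH := fun (m j : Fin 2) => ((hph m j 0).mul (hB m 0)).add ((hph m j 1).mul (hB m 1))
  have hL := fun (i : Fin 2) =>
    HP.const_mul 2 (((hpA i i 0).mul (hH i 0)).add ((hpA i i 1).mul (hH i 1)))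
  have hW := fun (m : Fin 2) =>
    (((hpA m 0 0).mul (hph m 0 0)).add ((hpA m 0 1).mul (hph m 1 0))).add
      (((hpA m 1 0).mul (hph m 0 1)).add ((hpA m 1 1).mul (hph m 1 1)))
  have hG := fun (i : Fin 2) => (hW i).mul (hB i i)
  have hD := fun (i : Fin 2) => ((hpA i 0 0).mul (hpA i 1 1)).sub ((hpA i 0 1).mul (hpA i 1 0))
  -- function identifications
  have funL : ∀ i : Fin 2, (fun y => (A y).mulVec (E y) i) = (fun y =>
      2 * (A y i 0 *
            (hess p y 0 0 * (A y 0 0 * pd 0 p y + A y 0 1 * pd 1 p y)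
              + hess p y 0 1 * (A y 1 0 * pd 0 p y + A y 1 1 * pd 1 p y))
          + A y i 1 *
            (hess p y 1 0 * (A y 0 0 * pd 0 p y + A y 0 1 * pd 1 p y)
              + hess p y 1 1 * (A y 1 0 * pd 0 p y + A y 1 1 * pd 1 p y)))) := by
    intro i; funext y
    simp [hE, Matrix.mulVec, dotProduct, Fin.sum_univ_two, grad, Matrix.mul_apply]
    try ring
  have funG : ∀ i : Fin 2, (fun y => (w y • (A y).mulVec (grad p y)) i) = (fun y =>
      ((A y 0 0 * hess p y 0 0 + A y 0 1 * hess p y 1 0)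
        + (A y 1 0 * hess p y 0 1 + A y 1 1 * hess p y 1 1))
      * (A y i 0 * pd 0 p y + A y i 1 * pd 1 p y)) := by
    intro i; funext y
    simp [hw, Matrix.mulVec, dotProduct, Fin.sum_univ_two, grad, Matrix.trace,
      Matrix.diag, Matrix.mul_apply]
    try ring
    left; fin_cases i <;> simp <;> ring
  have funD : (fun y => (A y).det) = (fun y => A y 0 0 * A y 1 1 - A y 0 1 * A y 1 0) :=
    funext fun y => Matrix.det_fin_two _
  -- symmetry facts
  have sA : A x 1 0 = A x 0 1 := (hAsymm x hx).apply 0 1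
  have hevA : (fun y => A y 1 0) =ᶠ[nhds x] (fun y => A y 0 1) := by
    filter_upwards [hmem] with y hy
    exact (hAsymm y hy).apply 0 1
  have sdA : ∀ m : Fin 2, pd m (fun y => A y 1 0) x = pd m (fun y => A y 0 1) x :=
    fun m => pd_congr_nhds hevA
  have sq : hess p x 1 0 = hess p x 0 1 := pd_comm (hpAt.of_le (by norm_num)) 1 0
  have hevH : (fun y => hess p y 1 0) =ᶠ[nhds x] (fun y => hess p y 0 1) := by
    filter_upwards [hmem] with y hy
    exact pd_comm ((hp.contDiffAt (hU.mem_nhds hy)).of_le (by norm_num)) 1 0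
  have sh : ∀ m : Fin 2, pd m (fun y => hess p y 1 0) x = pd m (fun y => hess p y 0 1) x :=
    fun m => pd_congr_nhds hevH
  have hev2 : (fun y => pd 1 (fun z => pd 0 p z) y) =ᶠ[nhds x]
      (fun y => pd 0 (fun z => pd 1 p z) y) := by
    filter_upwards [hmem] with y hy
    exact pd_comm ((hp.contDiffAt (hU.mem_nhds hy)).of_le (by norm_num)) 1 0
  have s3 : pd 1 (fun y => hess p y 0 0) x = pd 0 (fun y => hess p y 0 1) x := by
    have h1 := pd_comm (f := fun y => pd 0 p y) (x := x) (hpd2 0) 1 0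
    exact h1.trans (pd_congr_nhds hev2)
  have s4 : pd 0 (fun y => hess p y 1 1) x = pd 1 (fun y => hess p y 0 1) x :=
    pd_comm (f := fun y => pd 1 p y) (x := x) (hpd2 1) 0 1
  -- assemble
  have hdiv1 : divg (fun y => (A y).mulVec (E y)) x
      = pd 0 (fun y => (A y).mulVec (E y) 0) x + pd 1 (fun y => (A y).mulVec (E y) 1) x := by
    simp [divg, Fin.sum_univ_two]
  have hdiv2 : divg (fun y => w y • (A y).mulVec (grad p y)) x
      = pd 0 (fun y => (w y • (A y).mulVec (grad p y)) 0) x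
        + pd 1 (fun y => (w y • (A y).mulVec (grad p y)) 1) x := by
    simp [divg, Fin.sum_univ_two]
  rw [hdiv1, hdiv2, funL 0, funL 1, funG 0, funG 1]
  rw [(hL 0).deriv, (hL 1).deriv, (hG 0).deriv, (hG 1).deriv]
  rw [Matrix.det_fin_two (A x), Matrix.det_fin_two (hess p x), funD]
  simp only [Matrix.mulVec, dotProduct, Fin.sum_univ_two, grad, Matrix.cons_val',
    Matrix.cons_val_zero, Matrix.cons_val_one, Matrix.head_cons, Matrix.empty_val',
    Matrix.cons_val_fin_one, Matrix.head_fin_const, Matrix.of_apply]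
  rw [(hD 0).deriv, (hD 1).deriv, sA, sdA 0, sdA 1, sq, sh 0, sh 1, s3, s4]
  ring
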